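/- arXiv:0812.2724 — 2 statements merged into one kernel-verified Lean document; each statement's English description precedes it below -/
import Mathlib

section
/- The row space of the constraint matrix 𝒮^{(n_1,...,n_m)} and the row space of the parametrization matrix 𝒜^{(n_1,...,n_m)} are orthogonal complements of each other in ℝ^N, where N is the common number of columns (the number of directed edges of the grid). -/
/-- Vertices of the grid `{0,…,n₁} × ⋯ × {0,…,n_m}`. -/
abbrev GridV (m : ℕ) (n : Fin m → ℕ) := ∀ k : Fin m, Fin (n k + 1)

/-- `u` and `v` are nearest neighbors in direction `k`, i.e. `u - v ∈ {±e_k}`. -/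
abbrev gridAdjDir {m : ℕ} {n : Fin m → ℕ} (k : Fin m) (u v : GridV m n) : Prop :=
  (∀ l, l ≠ k → u l = v l) ∧ ((u k : ℕ) + 1 = (v k : ℕ) ∨ (v k : ℕ) + 1 = (u k : ℕ))

/-- Nearest-neighbor relation `u ∼ v` on the grid. -/
abbrev gridAdj {m : ℕ} {n : Fin m → ℕ} (u v : GridV m n) : Prop :=
  ∃ k, gridAdjDir k u v

/-- Directed edges of the grid. -/
abbrev DirEdge (m : ℕ) (n : Fin m → ℕ) := {p : GridV m n × GridV m n // gridAdj p.1 p.2}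

/-- Row indices of the parametrization matrix `𝒜`. -/
abbrev ParamRow (m : ℕ) (n : Fin m → ℕ) := (GridV m n) ⊕ (Σ k : Fin m, Fin (n k))

/-- The parametrization matrix `𝒜^{(n₁,…,n_m)}`. -/
def paramMatrix (m : ℕ) (n : Fin m → ℕ) : Matrix (ParamRow m n) (DirEdge m n) ℝ :=
  fun r e =>
    match r with
    | Sum.inl u => (if u = e.1.1 then 1 else 0) - (if u = e.1.2 then 1 else 0)
    | Sum.inr ⟨k, h⟩ =>
        if gridAdjDir k e.1.1 e.1.2 ∧ min (e.1.1 k : ℕ) (e.1.2 k : ℕ) = (h : ℕ)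
        then 1 else 0

/-- Unit squares of the grid. -/
abbrev SquareIdx (m : ℕ) (n : Fin m → ℕ) :=
  {q : (Fin m × Fin m) × GridV m n //
    q.1.1 < q.1.2 ∧ (q.2 q.1.1 : ℕ) < n q.1.1 ∧ (q.2 q.1.2 : ℕ) < n q.1.2}

/-- Move one step in direction `i`. -/
def bump {m : ℕ} {n : Fin m → ℕ} (u : GridV m n) (i : Fin m) : GridV m n :=
  Function.update u i (u i + 1)

/-- The constraint matrix `𝒮^{(n₁,…,n_m)}` of the relations (3.1). -/
def consMatrix (m : ℕ) (n : Fin m → ℕ) :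
    Matrix (SquareIdx m n × Fin 4) (DirEdge m n) ℝ :=
  fun r e =>
    let i := r.1.1.1.1
    let j := r.1.1.1.2
    let u := r.1.1.2
    let c : Fin 4 → GridV m n := ![u, bump u i, bump (bump u i) j, bump u j]
    let s := r.2
    (if e.1 = (c s, c (s + 1)) then (1 : ℝ) else 0) +
      (if e.1 = (c (s + 1), c (s + 2)) then 1 else 0) -
      (if e.1 = (c s, c (s + 3)) then 1 else 0) -
      (if e.1 = (c (s + 3), c (s + 2)) then 1 else 0)

section Aux

variable {m : ℕ} {n : Fin m → ℕ}

lemma bump_apply_ne (u : GridV m n) {i l : Fin m} (h : l ≠ i) : bump u i l = u l := by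
  simp [bump, Function.update_of_ne h]

lemma bump_apply_same (u : GridV m n) (i : Fin m) (h : (u i : ℕ) < n i) :
    ((bump u i) i : ℕ) = (u i : ℕ) + 1 := by
  simp only [bump, Function.update_self]
  have : ((u i : ℕ) + 1) % (n i + 1) = (u i : ℕ) + 1 := Nat.mod_eq_of_lt (by omega)
  simpa [Fin.val_add] using this

lemma bump_comm (u : GridV m n) {i j : Fin m} (hij : i ≠ j) :
    bump (bump u i) j = bump (bump u j) i := by
  funext l
  rcases eq_or_ne l i with rfl | h1
  · rw [bump_apply_ne _ (show l ≠ j from hij)]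
    simp [bump, Function.update_self, Function.update_of_ne hij]
  · rcases eq_or_ne l j with rfl | h2
    · rw [bump_apply_ne (bump u l) (show l ≠ i from fun h => h1 h)]
      simp [bump, Function.update_self, Function.update_of_ne hij.symm]
    · rw [bump_apply_ne _ h2, bump_apply_ne _ h1, bump_apply_ne _ h1, bump_apply_ne _ h2]

lemma gridAdjDir_symm {k : Fin m} {u v : GridV m n} (h : gridAdjDir k u v) :
    gridAdjDir k v u :=
  ⟨fun l hl => (h.1 l hl).symm, h.2.symm⟩

lemma adjDir_bump {u : GridV m n} {i : Fin m} (h : (u i : ℕ) < n i) :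
    gridAdjDir i u (bump u i) :=
  ⟨fun l hl => (bump_apply_ne u hl).symm, Or.inl (bump_apply_same u i h).symm⟩

lemma dir_unique {k k' : Fin m} {u v : GridV m n} (h : gridAdjDir k u v)
    (h' : gridAdjDir k' u v) : k = k' := by
  by_contra hne
  have h1 : u k' = v k' := h.1 k' (Ne.symm hne)
  have h2 := h'.2
  rw [h1] at h2
  omega

end Aux
noncomputable section Main
variable {m : ℕ} {n : Fin m → ℕ}

open Finset

/-- `x` extended to arbitrary ordered pairs of vertices. -/
def Xe (x : DirEdge m n → ℝ) (p q : GridV m n) : ℝ :=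
  if h : gridAdj p q then x ⟨(p, q), h⟩ else 0

lemma sum_edge_indicator (x : DirEdge m n → ℝ) (p q : GridV m n) :
    ∑ e : DirEdge m n, (if e.1 = (p, q) then (1 : ℝ) else 0) * x e = Xe x p q := by
  classical
  rw [Xe]
  split
  · rename_i h
    rw [Finset.sum_eq_single (⟨(p, q), h⟩ : DirEdge m n)]
    · simp
    · intro e _ hne
      rw [if_neg fun hc => hne (Subtype.ext hc), zero_mul]
    · simp
  · rename_i hna
    refine Finset.sum_eq_zero fun e _ => ?_
    rw [if_neg fun hc => hna (by have := e.2; rwa [hc] at this), zero_mul]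

/-- corners of a square -/
def cor (q : SquareIdx m n) : Fin 4 → GridV m n :=
  ![q.1.2, bump q.1.2 q.1.1.1, bump (bump q.1.2 q.1.1.1) q.1.1.2, bump q.1.2 q.1.1.2]

lemma sum_cons (x : DirEdge m n → ℝ) (q : SquareIdx m n) (s : Fin 4) :
    (∑ e, consMatrix m n (q, s) e * x e)
      = Xe x (cor q s) (cor q (s+1)) + Xe x (cor q (s+1)) (cor q (s+2))
        - Xe x (cor q s) (cor q (s+3)) - Xe x (cor q (s+3)) (cor q (s+2)) := by
  have key : ∀ e : DirEdge m n, consMatrix m n (q, s) e * x e =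
      (if e.1 = (cor q s, cor q (s+1)) then (1:ℝ) else 0) * x e
    + (if e.1 = (cor q (s+1), cor q (s+2)) then (1:ℝ) else 0) * x e
    - (if e.1 = (cor q s, cor q (s+3)) then (1:ℝ) else 0) * x e
    - (if e.1 = (cor q (s+3), cor q (s+2)) then (1:ℝ) else 0) * x e := by
    intro e
    have : consMatrix m n (q, s) e
        = (if e.1 = (cor q s, cor q (s+1)) then (1:ℝ) else 0)
        + (if e.1 = (cor q (s+1), cor q (s+2)) then (1:ℝ) else 0)
        - (if e.1 = (cor q s, cor q (s+3)) then (1:ℝ) else 0)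
        - (if e.1 = (cor q (s+3), cor q (s+2)) then (1:ℝ) else 0) := rfl
    rw [this]; ring
  rw [Finset.sum_congr rfl (fun e _ => key e), Finset.sum_sub_distrib,
    Finset.sum_sub_distrib, Finset.sum_add_distrib,
    sum_edge_indicator, sum_edge_indicator, sum_edge_indicator, sum_edge_indicator]

end Main
noncomputable section Main2
variable {m : ℕ} {n : Fin m → ℕ}

section Squares
variable (x : DirEdge m n → ℝ)
  (hx : ∀ r : SquareIdx m n × Fin 4, ∑ e, consMatrix m n r e * x e = 0)
  {i j : Fin m} {u : GridV m n}
  (hij : i < j) (hi : (u i : ℕ) < n i) (hj : (u j : ℕ) < n j)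

include hx hij hi hj

lemma sq0 :
    Xe x u (bump u i) + Xe x (bump u i) (bump (bump u i) j)
      - Xe x u (bump u j) - Xe x (bump u j) (bump (bump u i) j) = 0 := by
  have h := hx (⟨⟨(i,j),u⟩,⟨hij,hi,hj⟩⟩, (0:Fin 4))
  rw [sum_cons] at h
  exact h

lemma sq1 :
    Xe x (bump u i) (bump (bump u i) j) + Xe x (bump (bump u i) j) (bump u j)
      - Xe x (bump u i) u - Xe x u (bump u j) = 0 := by
  have h := hx (⟨⟨(i,j),u⟩,⟨hij,hi,hj⟩⟩, (1:Fin 4))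
  rw [sum_cons] at h
  exact h

lemma sq2 :
    Xe x (bump (bump u i) j) (bump u j) + Xe x (bump u j) u
      - Xe x (bump (bump u i) j) (bump u i) - Xe x (bump u i) u = 0 := by
  have h := hx (⟨⟨(i,j),u⟩,⟨hij,hi,hj⟩⟩, (2:Fin 4))
  rw [sum_cons] at h
  exact h

lemma sq3 :
    Xe x (bump u j) u + Xe x u (bump u i)
      - Xe x (bump u j) (bump (bump u i) j) - Xe x (bump (bump u i) j) (bump u i) = 0 := by
  have h := hx (⟨⟨(i,j),u⟩,⟨hij,hi,hj⟩⟩, (3:Fin 4))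
  rw [sum_cons] at h
  exact h

end Squares
end Main2
noncomputable section Main3
variable {m : ℕ} {n : Fin m → ℕ}

/-- symmetric part of `x` on an unordered edge -/
def ysym (x : DirEdge m n → ℝ) (p q : GridV m n) : ℝ := Xe x p q + Xe x q p

section Squares2
variable (x : DirEdge m n → ℝ)
  (hx : ∀ r : SquareIdx m n × Fin 4, ∑ e, consMatrix m n r e * x e = 0)
  {i j : Fin m} {u : GridV m n}

include hx

lemma Xcurl (hij : i ≠ j) (hi : (u i : ℕ) < n i) (hj : (u j : ℕ) < n j) :
    Xe x u (bump u i) + Xe x (bump u i) (bump (bump u i) j)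
      = Xe x u (bump u j) + Xe x (bump u j) (bump (bump u j) i) := by
  rcases lt_or_gt_of_ne hij with h | h
  · have h0 := sq0 x hx h hi hj
    rw [show bump (bump u j) i = bump (bump u i) j from (bump_comm u hij).symm]
    linarith
  · have h0 := sq0 x hx h hj hi
    rw [show bump (bump u i) j = bump (bump u j) i from (bump_comm u hij.symm).symm]
    linarith

lemma ypar (hij : i ≠ j) (hi : (u i : ℕ) < n i) (hj : (u j : ℕ) < n j) :
    ysym x u (bump u i) = ysym x (bump u j) (bump (bump u j) i) := by
  unfold ysym
  rcases lt_or_gt_of_ne hij with h | h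
  · have h0 := sq0 x hx h hi hj
    have h1 := sq1 x hx h hi hj
    have h2 := sq2 x hx h hi hj
    have h3 := sq3 x hx h hi hj
    rw [show bump (bump u i) j = bump (bump u j) i from bump_comm u hij] at h0 h1 h2 h3
    linarith
  · have h0 := sq0 x hx h hj hi
    have h1 := sq1 x hx h hj hi
    have h2 := sq2 x hx h hj hi
    have h3 := sq3 x hx h hj hi
    linarith

end Squares2
end Main3
noncomputable section Main4
variable {m : ℕ} {n : Fin m → ℕ}

/-- base point: coordinate `t` in direction `k`, `0` elsewhere. -/
def basePt (k : Fin m) (t : ℕ) : GridV m n := fun l =>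
  ⟨if l = k then min t (n l) else 0, by
    split
    · exact Nat.lt_succ_of_le (min_le_right _ _)
    · exact Nat.succ_pos _⟩

/-- the edge parameter read off from `x`. -/
def Wk (x : DirEdge m n → ℝ) (k : Fin m) (t : ℕ) : ℝ :=
  ysym x (basePt k t) (bump (basePt k t) k) / 2

/-- gauge-fixed (antisymmetric) part of `x` on an upward edge. -/
def zup (x : DirEdge m n → ℝ) (k : Fin m) (p : GridV m n) : ℝ :=
  Xe x p (bump p k) - Wk x k (p k)

lemma eq_bump_update {v : GridV m n} {l : Fin m} (hl : (v l : ℕ) ≠ 0) :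
    v = bump (Function.update v l
      ⟨(v l : ℕ) - 1, Nat.lt_of_le_of_lt (Nat.sub_le _ _) (v l).isLt⟩) l := by
  have hn : 1 ≤ n l := by have := (v l).isLt; omega
  funext l'
  rcases eq_or_ne l' l with rfl | h
  · apply Fin.ext
    rw [bump, Function.update_self, Function.update_self, Fin.val_add]
    show (v l' : ℕ) = ((v l' : ℕ) - 1 + ((1 : Fin (n l' + 1)) : ℕ)) % (n l' + 1)
    have h1 : ((1 : Fin (n l' + 1)) : ℕ) = 1 % (n l' + 1) := Fin.val_one' _
    rw [h1, Nat.mod_eq_of_lt (show 1 < n l' + 1 by omega)]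
    have := (v l').isLt
    rw [Nat.mod_eq_of_lt (by omega)]
    omega
  · rw [bump_apply_ne _ h, Function.update_of_ne h]

section Squares3
variable (x : DirEdge m n → ℝ)
  (hx : ∀ r : SquareIdx m n × Fin 4, ∑ e, consMatrix m n r e * x e = 0)

include hx

lemma y_base (k : Fin m) :
    ∀ (N : ℕ) (v : GridV m n), (∑ l, if l = k then 0 else (v l : ℕ)) ≤ N →
      (v k : ℕ) < n k →
      ysym x v (bump v k)
        = ysym x (basePt k (v k : ℕ)) (bump (basePt k ((v k : ℕ)) : GridV m n) k) := by
  intro N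
  induction N with
  | zero =>
    intro v hN hk
    have hz : ∀ l, l ≠ k → (v l : ℕ) = 0 := by
      intro l hl
      have := Finset.sum_eq_zero_iff.mp (Nat.le_zero.mp hN) l (Finset.mem_univ l)
      simpa [hl] using this
    have hv : v = basePt k (v k : ℕ) := by
      funext l
      apply Fin.ext
      rcases eq_or_ne l k with rfl | hl
      · have := (v l).isLt
        simp [basePt]
        omega
      · simp [basePt, hl, hz l hl]
    rw [← hv]
  | succ N ih =>
    intro v hN hk
    by_cases h0 : (∑ l, if l = k then 0 else (v l : ℕ)) = 0
    · exact ih v (by omega) hk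
    · obtain ⟨l, -, hl⟩ := Finset.exists_ne_zero_of_sum_ne_zero h0
      have hlk : l ≠ k := by
        intro h; subst h; simp at hl
      have hvl : (v l : ℕ) ≠ 0 := by simpa [hlk] using hl
      set v' : GridV m n := Function.update v l
        ⟨(v l : ℕ) - 1, Nat.lt_of_le_of_lt (Nat.sub_le _ _) (v l).isLt⟩ with hv'def
      have hbv : v = bump v' l := eq_bump_update hvl
      have hvk : v' k = v k := Function.update_of_ne hlk.symm _ _
      have hk' : (v' k : ℕ) < n k := by rw [hvk]; exact hk
      have hl' : (v' l : ℕ) < n l := by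
        have := (v l).isLt
        simp only [hv'def, Function.update_self]
        omega
      have step := ypar x hx (show k ≠ l from hlk.symm) hk' hl'
      rw [← hbv] at step
      have hsum : (∑ l', if l' = k then 0 else (v' l' : ℕ)) ≤ N := by
        have e1 : (∑ l' ∈ Finset.univ.erase l, (if l' = k then 0 else (v' l' : ℕ)))
            + (if l = k then 0 else (v' l : ℕ))
            = ∑ l', if l' = k then 0 else (v' l' : ℕ) :=
          Finset.sum_erase_add _ _ (Finset.mem_univ l)
        have e2 : (∑ l' ∈ Finset.univ.erase l, (if l' = k then 0 else (v l' : ℕ)))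
            + (if l = k then 0 else (v l : ℕ))
            = ∑ l', if l' = k then 0 else (v l' : ℕ) :=
          Finset.sum_erase_add _ _ (Finset.mem_univ l)
        have eeq : (∑ l' ∈ Finset.univ.erase l, (if l' = k then 0 else (v' l' : ℕ)))
            = ∑ l' ∈ Finset.univ.erase l, (if l' = k then 0 else (v l' : ℕ)) := by
          refine Finset.sum_congr rfl fun l' hl' => ?_
          have hne : l' ≠ l := Finset.ne_of_mem_erase hl'
          simp only [hv'def, Function.update_of_ne hne]
        have hvl' : (v' l : ℕ) = (v l : ℕ) - 1 := by
          simp only [hv'def, Function.update_self]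

        rw [if_neg hlk] at e1 e2
        omega
      have ihv := ih v' hsum hk'
      rw [← step, ihv, hvk]

lemma zup_antisym {k : Fin m} {v : GridV m n} (hk : (v k : ℕ) < n k) :
    Xe x v (bump v k) + Xe x (bump v k) v = 2 * Wk x k (v k : ℕ) := by
  have h := y_base x hx k _ v le_rfl hk
  rw [Wk, ← h, ysym]
  ring

lemma zcurl {i j : Fin m} {p : GridV m n} (hij : i ≠ j)
    (hi : (p i : ℕ) < n i) (hj : (p j : ℕ) < n j) :
    zup x i p + zup x j (bump p i) = zup x j p + zup x i (bump p j) := by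
  have h := Xcurl x hx hij hi hj
  unfold zup
  rw [show (bump p i) j = p j from bump_apply_ne p hij.symm,
    show (bump p j) i = p i from bump_apply_ne p hij]
  linarith

end Squares3
end Main4
noncomputable section Main5
variable {m : ℕ} {n : Fin m → ℕ}

/-- truncation of `u`: coordinates `< j` kept, coordinate `j` set to `t`, rest `0`. -/
def cutt (u : GridV m n) (j t : ℕ) : GridV m n := fun l =>
  ⟨if (l : ℕ) < j then (u l : ℕ) else if (l : ℕ) = j then min t (n l) else 0, by
    split
    · exact (u l).isLt
    · split
      · exact Nat.lt_succ_of_le (min_le_right _ _)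
      · exact Nat.succ_pos _⟩

lemma cutt_lt (u : GridV m n) {j t : ℕ} {l : Fin m} (h : (l : ℕ) < j) :
    cutt u j t l = u l := Fin.ext (by simp [cutt, h])

lemma cutt_eq_val (u : GridV m n) {j t : ℕ} {l : Fin m} (h : (l : ℕ) = j) :
    (cutt u j t l : ℕ) = min t (n l) := by simp [cutt, h]

lemma cutt_gt_val (u : GridV m n) {j t : ℕ} {l : Fin m} (h : j < (l : ℕ)) :
    (cutt u j t l : ℕ) = 0 := by
  simp only [cutt]
  rw [if_neg (by omega), if_neg (by omega)]

lemma cutt_bump_of_le (u : GridV m n) {k : Fin m} {j t : ℕ} (h : j ≤ (k : ℕ)) :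
    cutt (bump u k) j t = cutt u j t := by
  funext l
  apply Fin.ext
  have : ∀ l' : Fin m, (l' : ℕ) < j → bump u k l' = u l' := fun l' hl' =>
    bump_apply_ne u (by intro hc; subst hc; omega)
  by_cases hl : (l : ℕ) < j
  · rw [cutt_lt _ hl, cutt_lt _ hl, this l hl]
  · rcases eq_or_ne ((l : ℕ)) j with he | hne
    · rw [cutt_eq_val _ he, cutt_eq_val _ he]
    · rw [cutt_gt_val _ (by omega), cutt_gt_val _ (by omega)]

lemma cutt_bump_of_gt (u : GridV m n) {k : Fin m} {j t : ℕ} (h : (k : ℕ) < j) :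
    cutt (bump u k) j t = bump (cutt u j t) k := by
  funext l
  rcases eq_or_ne l k with rfl | hne
  · rw [cutt_lt _ h]
    show bump u l l = bump (cutt u j t) l l
    rw [bump, bump, Function.update_self, Function.update_self, cutt_lt u h]
  · rw [bump_apply_ne _ hne]
    apply Fin.ext
    by_cases hl : (l : ℕ) < j
    · rw [cutt_lt _ hl, cutt_lt _ hl, bump_apply_ne u hne]
    · rcases eq_or_ne ((l : ℕ)) j with he | hne2
      · rw [cutt_eq_val _ he, cutt_eq_val _ he]
      · rw [cutt_gt_val _ (by omega), cutt_gt_val _ (by omega)]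

lemma cutt_top (u : GridV m n) {j : ℕ} (h : m ≤ j) (t : ℕ) : cutt u j t = u := by
  funext l
  exact cutt_lt u (lt_of_lt_of_le l.isLt h)

lemma cutt_succ (u : GridV m n) {j : ℕ} (hj : j < m) :
    cutt u j ((u ⟨j, hj⟩ : ℕ)) = cutt u (j + 1) 0 := by
  funext l
  apply Fin.ext
  by_cases hl : (l : ℕ) < j
  · rw [cutt_lt _ hl, cutt_lt _ (by omega)]
  · rcases eq_or_ne ((l : ℕ)) j with he | hne
    · have hlj : l = ⟨j, hj⟩ := Fin.ext he
      rw [cutt_eq_val _ he, cutt_lt _ (by omega), hlj]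
      have := (u ⟨j, hj⟩).isLt
      omega
    · rcases eq_or_ne ((l : ℕ)) (j + 1) with he2 | hne2
      · rw [cutt_gt_val _ (by omega), cutt_eq_val _ he2]
        omega
      · rw [cutt_gt_val _ (by omega), cutt_gt_val _ (by omega)]

lemma cutt_bump_succ (u : GridV m n) {j : ℕ} (hj : j < m) {t : ℕ}
    (ht : t < n ⟨j, hj⟩) :
    bump (cutt u j t) ⟨j, hj⟩ = cutt u j (t + 1) := by
  have hval : ((cutt u j t) ⟨j, hj⟩ : ℕ) = t := by
    rw [show ((cutt u j t) ⟨j, hj⟩ : ℕ) = min t (n ⟨j, hj⟩) from cutt_eq_val u rfl]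
    omega
  funext l
  rcases eq_or_ne l ⟨j, hj⟩ with rfl | hne
  · apply Fin.ext
    rw [bump_apply_same _ _ (by rw [hval]; exact ht), hval,
      show ((cutt u j (t+1)) ⟨j, hj⟩ : ℕ) = min (t+1) (n ⟨j, hj⟩) from cutt_eq_val u rfl]
    omega
  · rw [bump_apply_ne _ hne]
    apply Fin.ext
    have hlj : (l : ℕ) ≠ j := fun hc => hne (Fin.ext hc)
    by_cases hl : (l : ℕ) < j
    · rw [cutt_lt _ hl, cutt_lt _ hl]
    · rw [cutt_gt_val _ (by omega), cutt_gt_val _ (by omega)]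

end Main5
noncomputable section Main6
variable {m : ℕ} {n : Fin m → ℕ}

/-- potential: sum of `zup` along the canonical staircase path from the origin to `u`. -/
def Psum (x : DirEdge m n → ℝ) (u : GridV m n) : ℝ :=
  ∑ j ∈ Finset.range m, if h : j < m then
    ∑ t ∈ Finset.range ((u ⟨j, h⟩ : ℕ)), zup x ⟨j, h⟩ (cutt u j t)
  else 0

section PathStep
variable (x : DirEdge m n → ℝ)
  (hx : ∀ r : SquareIdx m n × Fin 4, ∑ e, consMatrix m n r e * x e = 0)
include hx

lemma Psum_step {k : Fin m} {u : GridV m n} (hk : (u k : ℕ) < n k) :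
    Psum x (bump u k) - Psum x u = zup x k u := by
  classical
  set G : ℕ → ℝ := fun j => if j ≤ (k : ℕ) then 0 else zup x k (cutt u j 0) with hG
  have key : ∀ j ∈ Finset.range m,
      ((if h : j < m then
          ∑ t ∈ Finset.range (((bump u k) ⟨j, h⟩ : ℕ)), zup x ⟨j, h⟩ (cutt (bump u k) j t)
        else 0)
        - (if h : j < m then
          ∑ t ∈ Finset.range ((u ⟨j, h⟩ : ℕ)), zup x ⟨j, h⟩ (cutt u j t)
        else 0))
      = G (j + 1) - G j := by
    intro j hj
    rw [Finset.mem_range] at hj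
    rw [dif_pos hj, dif_pos hj]
    rcases lt_trichotomy j (k : ℕ) with hlt | heq | hgt
    · have hne : (⟨j, hj⟩ : Fin m) ≠ k := fun hc => absurd (congrArg Fin.val hc) (by simp; omega)
      rw [bump_apply_ne u hne]
      simp only [cutt_bump_of_le u (le_of_lt hlt)]
      simp [hG, Nat.succ_le_of_lt hlt, le_of_lt hlt]
    · have hjk : (⟨j, hj⟩ : Fin m) = k := Fin.ext heq
      rw [hjk, bump_apply_same u k hk, Finset.sum_range_succ]
      simp only [cutt_bump_of_le u (le_of_eq heq)]
      have hcs : cutt u j ((u k : ℕ)) = cutt u (j + 1) 0 := by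
        have h2 := cutt_succ u hj
        rwa [hjk] at h2
      rw [hcs]
      simp [hG, heq]
    · simp only [cutt_bump_of_gt u hgt]
      rw [bump_apply_ne u (fun hc => absurd (congrArg Fin.val hc) (by simp; omega))]
      rw [← Finset.sum_sub_distrib]
      have hbody : ∀ t ∈ Finset.range ((u ⟨j, hj⟩ : ℕ)),
          zup x ⟨j, hj⟩ (bump (cutt u j t) k) - zup x ⟨j, hj⟩ (cutt u j t)
            = zup x k (cutt u j (t + 1)) - zup x k (cutt u j t) := by
        intro t ht
        rw [Finset.mem_range] at ht
        have hJ : ((cutt u j t) ⟨j, hj⟩ : ℕ) < n ⟨j, hj⟩ := by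
          rw [show ((cutt u j t) ⟨j, hj⟩ : ℕ) = min t (n ⟨j, hj⟩) from cutt_eq_val u rfl]
          have := (u ⟨j, hj⟩).isLt; omega
        have hK : ((cutt u j t) k : ℕ) < n k := by
          rw [cutt_lt u hgt]; exact hk
        have hcurl := zcurl x hx
          (show k ≠ ⟨j, hj⟩ from fun hc => absurd (congrArg Fin.val hc) (by simp; omega)) hK hJ
        rw [cutt_bump_succ u hj (by have := (u ⟨j, hj⟩).isLt; omega)] at hcurl
        linarith
      rw [Finset.sum_congr rfl hbody, Finset.sum_range_sub (fun t => zup x k (cutt u j t)),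
        cutt_succ u hj]
      simp [hG, show ¬(j + 1 ≤ (k : ℕ)) by omega, show ¬(j ≤ (k : ℕ)) by omega]
  rw [Psum, Psum, ← Finset.sum_sub_distrib, Finset.sum_congr rfl key,
    Finset.sum_range_sub G]
  have hGm : G m = zup x k u := by
    rw [hG]
    simp only [cutt_top u (le_refl m)]
    rw [if_neg (by have := k.isLt; omega)]
  have hG0 : G 0 = 0 := by simp [hG]
  rw [hGm, hG0, sub_zero]

end PathStep
end Main6
noncomputable section Main7
variable {m : ℕ} {n : Fin m → ℕ}

section Repr
variable (x : DirEdge m n → ℝ)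
  (hx : ∀ r : SquareIdx m n × Fin 4, ∑ e, consMatrix m n r e * x e = 0)
include hx

lemma edge_val (e : DirEdge m n) (k₀ : Fin m) (hdir : gridAdjDir k₀ e.1.1 e.1.2) :
    x e = (-Psum x e.1.1) - (-Psum x e.1.2)
      + Wk x k₀ (min (e.1.1 k₀ : ℕ) (e.1.2 k₀ : ℕ)) := by
  have hxe : x e = Xe x e.1.1 e.1.2 := by
    rw [Xe, dif_pos e.2]
  rcases hdir.2 with hup | hdn
  · have hk : (e.1.1 k₀ : ℕ) < n k₀ := by have := (e.1.2 k₀).isLt; omega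
    have hv : e.1.2 = bump e.1.1 k₀ := by
      funext l
      rcases eq_or_ne l k₀ with rfl | hl
      · exact Fin.ext (by rw [bump_apply_same _ l hk]; omega)
      · rw [bump_apply_ne _ hl, ← hdir.1 l hl]
    have hmin : min (e.1.1 k₀ : ℕ) (e.1.2 k₀ : ℕ) = (e.1.1 k₀ : ℕ) := by omega
    have hz := Psum_step x hx hk
    rw [zup] at hz
    rw [hxe, hmin, hv]
    linarith
  · have hk : (e.1.2 k₀ : ℕ) < n k₀ := by have := (e.1.1 k₀).isLt; omega
    have hu : e.1.1 = bump e.1.2 k₀ := by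
      funext l
      rcases eq_or_ne l k₀ with rfl | hl
      · exact Fin.ext (by rw [bump_apply_same _ l hk]; omega)
      · rw [bump_apply_ne _ hl, hdir.1 l hl]
    have hmin : min (e.1.1 k₀ : ℕ) (e.1.2 k₀ : ℕ) = (e.1.2 k₀ : ℕ) := by omega
    have hz := Psum_step x hx hk
    have hanti := zup_antisym x hx hk
    rw [zup] at hz
    rw [hxe, hmin, hu]
    linarith

lemma repr_sum (e : DirEdge m n) :
    x e = ∑ p : ParamRow m n,
      (Sum.elim (fun u => -Psum x u)
        (fun kh : Σ k : Fin m, Fin (n k) => Wk x kh.1 (kh.2 : ℕ)) p)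
        * paramMatrix m n p e := by
  classical
  obtain ⟨k₀, hdir⟩ := e.2
  rw [Fintype.sum_sum_type]
  simp only [Sum.elim_inl, Sum.elim_inr]
  have hvert : (∑ u : GridV m n, (-Psum x u) * paramMatrix m n (Sum.inl u) e)
      = -Psum x e.1.1 + Psum x e.1.2 := by
    have hform : ∀ u : GridV m n, paramMatrix m n (Sum.inl u) e
        = (if u = e.1.1 then (1:ℝ) else 0) - (if u = e.1.2 then 1 else 0) := fun _ => rfl
    simp only [hform, mul_sub, Finset.sum_sub_distrib, mul_ite, mul_one, mul_zero,
      Finset.sum_ite_eq', Finset.mem_univ, if_true]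
    ring
  have hmlt : min (e.1.1 k₀ : ℕ) (e.1.2 k₀ : ℕ) < n k₀ := by
    rcases hdir.2 with h | h <;>
      (have h1 := (e.1.1 k₀).isLt; have h2 := (e.1.2 k₀).isLt; omega)
  have hedge : (∑ kh : (Σ k : Fin m, Fin (n k)),
        Wk x kh.1 (kh.2 : ℕ) * paramMatrix m n (Sum.inr kh) e)
      = Wk x k₀ (min (e.1.1 k₀ : ℕ) (e.1.2 k₀ : ℕ)) := by
    rw [Finset.sum_eq_single (⟨k₀, ⟨min (e.1.1 k₀ : ℕ) (e.1.2 k₀ : ℕ), hmlt⟩⟩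
        : Σ k : Fin m, Fin (n k))]
    · rw [show paramMatrix m n
          (Sum.inr ⟨k₀, ⟨min (e.1.1 k₀ : ℕ) (e.1.2 k₀ : ℕ), hmlt⟩⟩) e
        = (if gridAdjDir k₀ e.1.1 e.1.2 ∧ min (e.1.1 k₀ : ℕ) (e.1.2 k₀ : ℕ)
            = ((⟨min (e.1.1 k₀ : ℕ) (e.1.2 k₀ : ℕ), hmlt⟩ : Fin (n k₀)) : ℕ)
          then (1:ℝ) else 0) from rfl]
      rw [if_pos ⟨hdir, rfl⟩, mul_one]
    · rintro ⟨k, h⟩ - hne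
      rw [show paramMatrix m n (Sum.inr ⟨k, h⟩) e
        = (if gridAdjDir k e.1.1 e.1.2 ∧ min (e.1.1 k : ℕ) (e.1.2 k : ℕ) = (h : ℕ)
          then (1:ℝ) else 0) from rfl]
      rw [if_neg, mul_zero]
      rintro ⟨hadj, hmin⟩
      apply hne
      have hk : k = k₀ := dir_unique hadj hdir
      subst hk
      exact congrArg (Sigma.mk k) (Fin.ext (by rw [← hmin]))
    · intro h; exact absurd (Finset.mem_univ _) h
  rw [hvert, hedge, edge_val x hx e k₀ hdir]
  ring

lemma mem_span_param : x ∈ Submodule.span ℝ (Set.range (paramMatrix m n)) := by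
  have hrep : x = ∑ p : ParamRow m n,
      (Sum.elim (fun u => -Psum x u)
        (fun kh : Σ k : Fin m, Fin (n k) => Wk x kh.1 (kh.2 : ℕ)) p)
        • paramMatrix m n p := by
    funext e
    rw [Finset.sum_apply]
    simp only [Pi.smul_apply, smul_eq_mul]
    exact repr_sum x hx e
  rw [hrep]
  exact Submodule.sum_mem _ fun p _ =>
    Submodule.smul_mem _ _ (Submodule.subset_span ⟨p, rfl⟩)

end Repr
end Main7
noncomputable section Main8
variable {m : ℕ} {n : Fin m → ℕ}

lemma Xe_inl (w a b : GridV m n) (hadj : gridAdj a b) :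
    Xe (paramMatrix m n (Sum.inl w)) a b
      = (if w = a then (1:ℝ) else 0) - (if w = b then 1 else 0) := by
  rw [Xe, dif_pos hadj]
  rfl

lemma indW_eq (k : Fin m) (hh : Fin (n k)) {d : Fin m} {a b : GridV m n}
    (hadj : gridAdjDir d a b) :
    Xe (paramMatrix m n (Sum.inr ⟨k, hh⟩)) a b
      = if k = d ∧ min (a d : ℕ) (b d : ℕ) = (hh : ℕ) then (1:ℝ) else 0 := by
  rw [Xe, dif_pos ⟨d, hadj⟩]
  show (if gridAdjDir k a b ∧ min (a k : ℕ) (b k : ℕ) = (hh : ℕ) then (1:ℝ) else 0) = _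
  by_cases hkd : k = d
  · subst hkd
    exact if_congr ⟨fun ⟨_, hm⟩ => ⟨rfl, hm⟩, fun ⟨_, hm⟩ => ⟨hadj, hm⟩⟩ rfl rfl
  · rw [if_neg fun ⟨hadj', _⟩ => hkd (dir_unique hadj' hadj),
      if_neg fun ⟨hc, _⟩ => hkd hc]

lemma Xe_inl_cycle (w a b c d : GridV m n) (hab : gridAdj a b) (hbc : gridAdj b c)
    (had : gridAdj a d) (hdc : gridAdj d c) :
    Xe (paramMatrix m n (Sum.inl w)) a b + Xe (paramMatrix m n (Sum.inl w)) b c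
      - Xe (paramMatrix m n (Sum.inl w)) a d - Xe (paramMatrix m n (Sum.inl w)) d c = 0 := by
  rw [Xe_inl _ _ _ hab, Xe_inl _ _ _ hbc, Xe_inl _ _ _ had, Xe_inl _ _ _ hdc]
  ring

lemma Xe_inr_cycle (k : Fin m) (hh : Fin (n k)) (a b c d : GridV m n) {d1 d2 : Fin m}
    (hab : gridAdjDir d1 a b) (hdc : gridAdjDir d1 d c)
    (hbc : gridAdjDir d2 b c) (had : gridAdjDir d2 a d)
    (hmin1 : min (a d1 : ℕ) (b d1 : ℕ) = min (d d1 : ℕ) (c d1 : ℕ))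
    (hmin2 : min (b d2 : ℕ) (c d2 : ℕ) = min (a d2 : ℕ) (d d2 : ℕ)) :
    Xe (paramMatrix m n (Sum.inr ⟨k, hh⟩)) a b + Xe (paramMatrix m n (Sum.inr ⟨k, hh⟩)) b c
      - Xe (paramMatrix m n (Sum.inr ⟨k, hh⟩)) a d
      - Xe (paramMatrix m n (Sum.inr ⟨k, hh⟩)) d c = 0 := by
  rw [indW_eq _ _ hab, indW_eq _ _ hbc, indW_eq _ _ had, indW_eq _ _ hdc, hmin1, hmin2]
  ring

lemma orth_rows (p : ParamRow m n) (q : SquareIdx m n) (s : Fin 4) :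
    ∑ e, paramMatrix m n p e * consMatrix m n (q, s) e = 0 := by
  rw [Finset.sum_congr rfl (fun e _ => mul_comm _ _), sum_cons]
  obtain ⟨⟨⟨i, j⟩, u⟩, hij, hi, hj⟩ := q
  have hBj : ((bump u i) j : ℕ) = (u j : ℕ) := congrArg Fin.val (bump_apply_ne u (ne_of_gt hij))
  have hBi : ((bump u i) i : ℕ) = (u i : ℕ) + 1 := bump_apply_same u i hi
  have hCi : ((bump (bump u i) j) i : ℕ) = (u i : ℕ) + 1 := by
    rw [show (bump (bump u i) j) i = (bump u i) i from bump_apply_ne _ (ne_of_lt hij)]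
    exact hBi
  have hCj : ((bump (bump u i) j) j : ℕ) = (u j : ℕ) + 1 := by
    rw [bump_apply_same _ j (by rw [hBj]; exact hj), hBj]
  have hDi : ((bump u j) i : ℕ) = (u i : ℕ) := congrArg Fin.val (bump_apply_ne u (ne_of_lt hij))
  have hDj : ((bump u j) j : ℕ) = (u j : ℕ) + 1 := bump_apply_same u j hj
  have aAB : gridAdjDir i u (bump u i) := adjDir_bump hi
  have aBC : gridAdjDir j (bump u i) (bump (bump u i) j) :=
    adjDir_bump (by rw [hBj]; exact hj)
  have aAD : gridAdjDir j u (bump u j) := adjDir_bump hj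
  have aDC : gridAdjDir i (bump u j) (bump (bump u i) j) := by
    rw [show bump (bump u i) j = bump (bump u j) i from bump_comm u (ne_of_lt hij)]
    exact adjDir_bump (by rw [hDi]; exact hi)
  rcases p with w | ⟨k, hh⟩
  · fin_cases s
    · exact Xe_inl_cycle w _ _ _ _ ⟨i, aAB⟩ ⟨j, aBC⟩ ⟨j, aAD⟩ ⟨i, aDC⟩
    · exact Xe_inl_cycle w _ _ _ _ ⟨j, aBC⟩ ⟨i, gridAdjDir_symm aDC⟩
        ⟨i, gridAdjDir_symm aAB⟩ ⟨j, aAD⟩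
    · exact Xe_inl_cycle w _ _ _ _ ⟨i, gridAdjDir_symm aDC⟩ ⟨j, gridAdjDir_symm aAD⟩
        ⟨j, gridAdjDir_symm aBC⟩ ⟨i, gridAdjDir_symm aAB⟩
    · exact Xe_inl_cycle w _ _ _ _ ⟨j, gridAdjDir_symm aAD⟩ ⟨i, aAB⟩
        ⟨i, aDC⟩ ⟨j, gridAdjDir_symm aBC⟩
  · fin_cases s
    · exact Xe_inr_cycle k hh u (bump u i) (bump (bump u i) j) (bump u j) aAB aDC aBC aAD
        (by rw [hBi, hDi, hCi]) (by rw [hBj, hCj, hDj])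
    · exact Xe_inr_cycle k hh (bump u i) (bump (bump u i) j) (bump u j) u aBC aAD (gridAdjDir_symm aDC) (gridAdjDir_symm aAB)
        (by rw [hBj, hCj, hDj]) (by rw [hCi, hDi, hBi])
    · exact Xe_inr_cycle k hh (bump (bump u i) j) (bump u j) u (bump u i) (gridAdjDir_symm aDC) (gridAdjDir_symm aAB)
        (gridAdjDir_symm aAD) (gridAdjDir_symm aBC)
        (by rw [hCi, hDi, hBi]) (by rw [hDj, hCj, hBj])
    · exact Xe_inr_cycle k hh (bump u j) u (bump u i) (bump (bump u i) j) (gridAdjDir_symm aAD) (gridAdjDir_symm aBC) aAB aDC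
        (by rw [hDj, hCj, hBj]) (by rw [hBi, hDi, hCi])

end Main8
section Final
variable {m : ℕ} {n : Fin m → ℕ}

lemma span_orth {ι : Type*} (f : ι → (DirEdge m n → ℝ)) (g : DirEdge m n → ℝ)
    (h0 : ∀ i, ∑ e, g e * f i e = 0) {x : DirEdge m n → ℝ}
    (hx : x ∈ Submodule.span ℝ (Set.range f)) :
    ∑ e, g e * x e = 0 := by
  induction hx using Submodule.span_induction with
  | mem y hy => obtain ⟨i, rfl⟩ := hy; exact h0 i
  | zero => simp
  | add y z hy hz ihy ihz =>
    simp only [Pi.add_apply, mul_add, Finset.sum_add_distrib, ihy, ihz, add_zero]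
  | smul a y hy ihy =>
    simp only [Pi.smul_apply, smul_eq_mul]
    rw [Finset.sum_congr rfl fun e _ => (by ring : g e * (a * y e) = a * (g e * y e)),
      ← Finset.mul_sum, ihy, mul_zero]

end Final

section Euclid
variable {ι : Type*} [Fintype ι]

/-- identity map into `EuclideanSpace`. -/
def toE (v : ι → ℝ) : EuclideanSpace ℝ ι := WithLp.toLp 2 v

lemma innerE (u v : EuclideanSpace ℝ ι) : (inner ℝ u v : ℝ) = ∑ e, u e * v e := by
  simp [PiLp.inner_apply, RCLike.inner_apply, conj_trivial, mul_comm]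

lemma span_toE {κ : Type*} (f : κ → (ι → ℝ)) {x : ι → ℝ}
    (hx : x ∈ Submodule.span ℝ (Set.range f)) :
    toE x ∈ Submodule.span ℝ (Set.range (fun i => toE (f i))) := by
  induction hx using Submodule.span_induction with
  | mem y hy => obtain ⟨i, rfl⟩ := hy; exact Submodule.subset_span ⟨i, rfl⟩
  | zero => rw [show toE (0 : ι → ℝ) = 0 from rfl]; exact Submodule.zero_mem _
  | add y z hy hz ihy ihz =>
    rw [show toE (y + z) = toE y + toE z from rfl]; exact Submodule.add_mem _ ihy ihz
  | smul a y hy ihy =>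
    rw [show toE (a • y) = a • toE y from rfl]; exact Submodule.smul_mem _ a ihy

lemma span_ofE {κ : Type*} (f : κ → (ι → ℝ)) {x : EuclideanSpace ℝ ι}
    (hx : x ∈ Submodule.span ℝ (Set.range (fun i => toE (f i)))) :
    (x : ι → ℝ) ∈ Submodule.span ℝ (Set.range f) := by
  induction hx using Submodule.span_induction with
  | mem y hy => obtain ⟨i, rfl⟩ := hy; exact Submodule.subset_span ⟨i, rfl⟩
  | zero => exact Submodule.zero_mem _
  | add y z hy hz ihy ihz => exact Submodule.add_mem _ ihy ihz
  | smul a y hy ihy => exact Submodule.smul_mem _ a ihy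

end Euclid

set_option maxHeartbeats 1000000 in
/-- **Corollary 3.10.** The row spaces of `𝒮` and `𝒜` are orthogonal
complements of each other in `ℝ^{DirEdge}`: a vector lies in the row span of `𝒜` iff it is
orthogonal to every row of `𝒮`, and vice versa. -/
theorem rowspaces_orthogonal_complements {m : ℕ} (n : Fin m → ℕ) :
    (∀ x : DirEdge m n → ℝ,
      x ∈ Submodule.span ℝ (Set.range (paramMatrix m n)) ↔
        ∀ r : SquareIdx m n × Fin 4, ∑ e, consMatrix m n r e * x e = 0) ∧
    (∀ x : DirEdge m n → ℝ,
      x ∈ Submodule.span ℝ (Set.range (consMatrix m n)) ↔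
        ∀ r : ParamRow m n, ∑ e, paramMatrix m n r e * x e = 0) := by
  have orth' : ∀ (r : SquareIdx m n × Fin 4) (p : ParamRow m n),
      ∑ e, consMatrix m n r e * paramMatrix m n p e = 0 := by
    intro r p
    rw [Finset.sum_congr rfl fun e _ => mul_comm _ _]
    exact orth_rows p r.1 r.2
  constructor
  · intro x
    refine ⟨fun hx r => span_orth _ _ (orth' r) hx, fun hx => mem_span_param x hx⟩
  · intro x
    constructor
    · intro hx p
      have h0 : ∀ r : SquareIdx m n × Fin 4,
          ∑ e, paramMatrix m n p e * consMatrix m n r e = 0 :=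
        fun r => orth_rows p r.1 r.2
      exact span_orth _ _ h0 hx
    · intro hx
      set K : Submodule ℝ (EuclideanSpace ℝ (DirEdge m n)) :=
        Submodule.span ℝ (Set.range (fun p => toE (paramMatrix m n p))) with hK
      set L : Submodule ℝ (EuclideanSpace ℝ (DirEdge m n)) :=
        Submodule.span ℝ (Set.range (fun r => toE (consMatrix m n r))) with hL
      have hLK : Lᗮ ≤ K := by
        intro y hy
        have hy0 : ∀ r : SquareIdx m n × Fin 4, ∑ e, consMatrix m n r e * y e = 0 := by
          intro r
          have h1 := (Submodule.mem_orthogonal L y).mp hy (toE (consMatrix m n r))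
            (Submodule.subset_span ⟨r, rfl⟩)
          rw [innerE] at h1
          exact h1
        exact span_toE (paramMatrix m n) (mem_span_param y hy0)
      have hKL : Kᗮ ≤ L := by
        have h2 : Kᗮ ≤ Lᗮᗮ := Submodule.orthogonal_le hLK
        rwa [Submodule.orthogonal_orthogonal L] at h2
      have hxK : toE x ∈ Kᗮ := by
        rw [Submodule.mem_orthogonal]
        intro u hu
        rw [innerE, Finset.sum_congr rfl fun e _ => mul_comm _ _]
        have h0 : ∀ p : ParamRow m n, ∑ e, x e * paramMatrix m n p e = 0 := by
          intro p
          rw [Finset.sum_congr rfl fun e _ => mul_comm _ _]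
          exact hx p
        exact span_orth (paramMatrix m n) x h0 (span_ofE (paramMatrix m n) hu)
      exact span_ofE (consMatrix m n) (hKL hxK)
end

section
/- Let 𝒞 be the collection of subsets C of the set ℰ of directed edges of the grid such that: (i) C is a disjoint union of pairs of distinct parallel directed edges; (ii) the underlying undirected multigraph of C is a union of edge-disjoint cycles; and (iii) no proper subset of C satisfies both (i) and (ii). Then 𝒞 is the set of circuits of a matroid on ℰ: 𝒞 does not contain the empty set, no member of 𝒞 properly contains another, and for distinct C_1, C_2 ∈ 𝒞 and e ∈ C_1 ∩ C_2 there exists C_3 ∈ 𝒞 with C_3 ⊆ (C_1 ∪ C_2) \ {e}. -/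
open scoped symmDiff


/-- Two directed edges are parallel: both point in the same lattice direction `e_k`, with
the same orientation and the same height in that direction (i.e. one is obtained from the
other by a shift `w ∈ ∑_{ℓ≠k} ℤ e_ℓ`). -/
def parallelE {m : ℕ} {n : Fin m → ℕ} (e f : DirEdge m n) : Prop :=
  ∃ k, gridAdjDir k e.1.1 e.1.2 ∧ gridAdjDir k f.1.1 f.1.2 ∧
    f.1.1 k = e.1.1 k ∧ f.1.2 k = e.1.2 k

/-- Property (i): `C` is a disjoint union of pairs of distinct parallel directed edges,
i.e. `C` carries a perfect matching into parallel pairs. -/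
def pairedParallel {m : ℕ} {n : Fin m → ℕ} (C : Finset (DirEdge m n)) : Prop :=
  ∃ σ : DirEdge m n → DirEdge m n,
    ∀ e ∈ C, σ e ∈ C ∧ σ e ≠ e ∧ parallelE e (σ e) ∧ σ (σ e) = e

/-- Property (ii): the underlying undirected multigraph of `C` is a union of edge-disjoint
cycles; equivalently (Veblen), every vertex has even degree. -/
def cycleUnion {m : ℕ} {n : Fin m → ℕ} (C : Finset (DirEdge m n)) : Prop :=
  ∀ x : GridV m n,
    Even ((C.filter fun e => e.1.1 = x).card + (C.filter fun e => e.1.2 = x).card)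

/-- The collection `𝒞`: nonempty sets of directed edges satisfying (i) and (ii), no
nonempty proper subset of which satisfies both (i) and (ii). -/
def circuitSet (m : ℕ) (n : Fin m → ℕ) : Set (Finset (DirEdge m n)) :=
  {C | C.Nonempty ∧ pairedParallel C ∧ cycleUnion C ∧
    ∀ B ⊂ C, B.Nonempty → ¬(pairedParallel B ∧ cycleUnion B)}

-- direction uniqueness
theorem gridAdjDir_unique {m : ℕ} {n : Fin m → ℕ} {k k' : Fin m} {u v : GridV m n}
    (h : gridAdjDir k u v) (h' : gridAdjDir k' u v) : k = k' := by
  by_contra hne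
  have h1 := h.1 k' (Ne.symm hne)
  have h2 := h'.2
  have : (u k' : ℕ) = (v k' : ℕ) := by rw [h1]
  omega

theorem parallelE_refl {m : ℕ} {n : Fin m → ℕ} (e : DirEdge m n) : parallelE e e := by
  obtain ⟨k, hk⟩ := e.2
  exact ⟨k, hk, hk, rfl, rfl⟩

theorem parallelE_symm {m : ℕ} {n : Fin m → ℕ} {e f : DirEdge m n}
    (h : parallelE e f) : parallelE f e := by
  obtain ⟨k, h1, h2, h3, h4⟩ := h
  exact ⟨k, h2, h1, h3.symm, h4.symm⟩

theorem parallelE_trans {m : ℕ} {n : Fin m → ℕ} {e f g : DirEdge m n}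
    (h : parallelE e f) (h' : parallelE f g) : parallelE e g := by
  obtain ⟨k, h1, h2, h3, h4⟩ := h
  obtain ⟨k', h1', h2', h3', h4'⟩ := h'
  obtain rfl : k = k' := gridAdjDir_unique h2 h1'
  exact ⟨k, h1, h2', h3'.trans h3, h4'.trans h4⟩

instance {m : ℕ} {n : Fin m → ℕ} (e f : DirEdge m n) : Decidable (parallelE e f) := by
  unfold parallelE gridAdjDir; infer_instance

-- involution gives even card
theorem even_card_of_invol {α : Type*} [DecidableEq α] (S : Finset α) (σ : α → α)
    (h : ∀ x ∈ S, σ x ∈ S ∧ σ x ≠ x ∧ σ (σ x) = x) : Even S.card := by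
  induction S using Finset.strongInduction with
  | _ S ih =>
    rcases S.eq_empty_or_nonempty with rfl | ⟨x, hx⟩
    · simp
    · have hσx := h x hx
      have hsub : {x, σ x} ⊆ S := by
        intro y hy; simp at hy; rcases hy with rfl | rfl; exact hx; exact hσx.1
      have hcard : S.card = (S \ {x, σ x}).card + 2 := by
        rw [Finset.card_sdiff_of_subset hsub, Finset.card_pair (Ne.symm hσx.2.1)]
        have := Finset.card_le_card hsub
        rw [Finset.card_pair (Ne.symm hσx.2.1)] at this
        omega
      have hss : S \ {x, σ x} ⊂ S := by
        apply Finset.sdiff_ssubset hsub; simp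
      have hev : Even (S \ {x, σ x}).card := by
        apply ih _ hss
        intro y hy
        simp only [Finset.mem_sdiff, Finset.mem_insert, Finset.mem_singleton] at hy
        obtain ⟨hyS, hy2⟩ := hy
        push_neg at hy2
        obtain ⟨h1, h2, h3⟩ := h y hyS
        refine ⟨?_, h2, h3⟩
        simp only [Finset.mem_sdiff, Finset.mem_insert, Finset.mem_singleton]
        refine ⟨h1, ?_⟩
        push_neg
        constructor
        · intro he; exact hy2.2 (by rw [← he, h3])
        · intro he; apply hy2.1; have := congrArg σ he; rwa [h3, hσx.2.2] at this
      rw [hcard]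
      simp [Nat.even_iff] at hev ⊢
      omega

theorem classEven_of_pairedParallel {m : ℕ} {n : Fin m → ℕ} {C : Finset (DirEdge m n)}
    (h : pairedParallel C) (f : DirEdge m n) :
    Even ((C.filter fun e => parallelE f e).card) := by
  obtain ⟨σ, hσ⟩ := h
  apply even_card_of_invol _ σ
  intro x hx
  simp only [Finset.mem_filter] at hx ⊢
  obtain ⟨h1, h2, h3, h4⟩ := hσ x hx.1
  exact ⟨⟨h1, parallelE_trans hx.2 h3⟩, h2, h4⟩

theorem pairedParallel_of_classEven {m : ℕ} {n : Fin m → ℕ} (C : Finset (DirEdge m n))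
    (h : ∀ f, Even ((C.filter fun e => parallelE f e).card)) : pairedParallel C := by
  induction C using Finset.strongInduction with
  | _ C ih =>
    rcases C.eq_empty_or_nonempty with rfl | ⟨e, he⟩
    · exact ⟨id, by simp⟩
    · have heS : e ∈ C.filter fun x => parallelE e x :=
        Finset.mem_filter.2 ⟨he, parallelE_refl e⟩
      have hlt : 1 < (C.filter fun x => parallelE e x).card := by
        have h1 : 0 < (C.filter fun x => parallelE e x).card := Finset.card_pos.2 ⟨e, heS⟩
        have := h e
        rw [Nat.even_iff] at this
        omega
      obtain ⟨f, hfS, hfe⟩ := Finset.exists_mem_ne hlt e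
      rw [Finset.mem_filter] at hfS
      obtain ⟨hfC, hef⟩ := hfS
      set C' := C \ {e, f} with hC'
      have hsub : {e, f} ⊆ C := by
        intro y hy; simp at hy; rcases hy with rfl | rfl; exact he; exact hfC
      have hss : C' ⊂ C := Finset.sdiff_ssubset hsub (by simp)
      have hfilt : ∀ g, (C'.filter fun x => parallelE g x)
          = (C.filter fun x => parallelE g x) \ {e, f} := by
        intro g; ext y
        simp only [Finset.mem_filter, Finset.mem_sdiff, hC']
        tauto
      have h' : ∀ g, Even ((C'.filter fun x => parallelE g x).card) := by
        intro g
        rw [hfilt g]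
        by_cases hge : parallelE g e
        · have hgf : parallelE g f := parallelE_trans hge hef
          have hsub2 : ({e, f} : Finset (DirEdge m n)) ⊆ C.filter fun x => parallelE g x := by
            intro y hy; simp at hy
            rcases hy with rfl | rfl
            · exact Finset.mem_filter.2 ⟨he, hge⟩
            · exact Finset.mem_filter.2 ⟨hfC, hgf⟩
          rw [Finset.card_sdiff_of_subset hsub2, Finset.card_pair (Ne.symm hfe)]
          have hle := Finset.card_le_card hsub2
          rw [Finset.card_pair (Ne.symm hfe)] at hle
          have := h g
          simp [Nat.even_iff] at this ⊢
          omega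
        · have hgf : ¬ parallelE g f := fun hgf =>
            hge (parallelE_trans hgf (parallelE_symm hef))
          have : (C.filter fun x => parallelE g x) \ {e, f}
              = C.filter fun x => parallelE g x := by
            apply Finset.sdiff_eq_self_of_disjoint
            rw [Finset.disjoint_left]
            intro y hy hy2
            simp at hy2
            rw [Finset.mem_filter] at hy
            rcases hy2 with rfl | rfl
            · exact hge hy.2
            · exact hgf hy.2
          rw [this]; exact h g
      obtain ⟨σ', hσ'⟩ := ih C' hss h'
      refine ⟨fun x => if x = e then f else if x = f then e else σ' x, ?_⟩
      intro x hx
      dsimp only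
      by_cases hxe : x = e
      · rw [if_pos hxe, if_neg hfe, if_pos rfl]
        exact ⟨hfC, fun hh => hfe (hh.trans hxe), hxe ▸ hef, hxe.symm⟩
      · by_cases hxf : x = f
        · rw [if_neg hxe, if_pos hxf, if_pos rfl]
          exact ⟨he, fun hh => hfe (hh.trans hxf).symm, by rw [hxf]; exact parallelE_symm hef,
            hxf.symm⟩
        · have hxC' : x ∈ C' := by
            simp only [hC', Finset.mem_sdiff, Finset.mem_insert, Finset.mem_singleton]
            exact ⟨hx, by push_neg; exact ⟨hxe, hxf⟩⟩
          obtain ⟨h1, h2, h3, h4⟩ := hσ' x hxC'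
          have hσ'ne : σ' x ≠ e ∧ σ' x ≠ f := by
            have := Finset.mem_sdiff.1 h1
            simp only [Finset.mem_insert, Finset.mem_singleton] at this
            push_neg at this
            exact this.2
          rw [if_neg hxe, if_neg hxf, if_neg hσ'ne.1, if_neg hσ'ne.2]
          exact ⟨(Finset.mem_sdiff.1 h1).1, h2, h3, h4⟩

theorem filter_card_symmDiff {α : Type*} [DecidableEq α] (A B : Finset α)
    (P : α → Prop) [DecidablePred P] :
    ((A ∆ B).filter P).card + 2 * ((A ∩ B).filter P).card
      = (A.filter P).card + (B.filter P).card := by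
  set a := A.filter P
  set b := B.filter P
  have hΔ : (A ∆ B).filter P = a ∆ b := by
    ext y
    simp only [Finset.mem_filter, Finset.mem_symmDiff, a, b]
    tauto
  have hi : (A ∩ B).filter P = a ∩ b := by
    ext y
    simp only [Finset.mem_filter, Finset.mem_inter, a, b]
    tauto
  rw [hΔ, hi]
  have h1 : a ∆ b = (a ∪ b) \ (a ∩ b) := by
    ext y
    simp only [Finset.mem_symmDiff, Finset.mem_sdiff, Finset.mem_union, Finset.mem_inter]
    tauto
  have h2 : a ∩ b ⊆ a ∪ b := (Finset.inter_subset_left).trans Finset.subset_union_left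
  have h3 := Finset.card_union_add_card_inter a b
  have h4 := Finset.card_le_card h2
  rw [h1, Finset.card_sdiff_of_subset h2]
  omega

theorem pairedParallel_symmDiff {m : ℕ} {n : Fin m → ℕ} {A B : Finset (DirEdge m n)}
    (hA : pairedParallel A) (hB : pairedParallel B) : pairedParallel (A ∆ B) := by
  apply pairedParallel_of_classEven
  intro f
  have h1 := filter_card_symmDiff A B (fun e => parallelE f e)
  have h2 := classEven_of_pairedParallel hA f
  have h3 := classEven_of_pairedParallel hB f
  simp only [Nat.even_iff] at h2 h3 ⊢
  omega

theorem cycleUnion_symmDiff {m : ℕ} {n : Fin m → ℕ} {A B : Finset (DirEdge m n)}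
    (hA : cycleUnion A) (hB : cycleUnion B) : cycleUnion (A ∆ B) := by
  intro x
  have h1 := filter_card_symmDiff A B (fun e : DirEdge m n => e.1.1 = x)
  have h2 := filter_card_symmDiff A B (fun e : DirEdge m n => e.1.2 = x)
  have hAx := hA x
  have hBx := hB x
  simp only [Nat.even_iff] at hAx hBx ⊢
  omega

theorem exists_circuit_subset {m : ℕ} {n : Fin m → ℕ} (D : Finset (DirEdge m n)) :
    D.Nonempty → pairedParallel D → cycleUnion D →
    ∃ C ∈ circuitSet m n, C ⊆ D := by
  induction D using Finset.strongInduction with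
  | _ D ih =>
    intro hne h1 h2
    by_cases hmin : ∀ B ⊂ D, B.Nonempty → ¬(pairedParallel B ∧ cycleUnion B)
    · exact ⟨D, ⟨hne, h1, h2, hmin⟩, subset_rfl⟩
    · push_neg at hmin
      obtain ⟨B, hBD, hBne, hB⟩ := hmin
      obtain ⟨C, hC, hCB⟩ := ih B hBD hBne hB.1 hB.2
      exact ⟨C, hC, hCB.trans hBD.subset⟩


/-- **Proposition 4.10.** `𝒞` satisfies the circuit axioms of a matroid on
the set of directed edges of the grid. -/
theorem circuitSet_is_matroid_circuits (m : ℕ) (n : Fin m → ℕ) :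
    (∅ ∉ circuitSet m n) ∧
    (∀ C₁ ∈ circuitSet m n, ∀ C₂ ∈ circuitSet m n, C₁ ⊆ C₂ → C₁ = C₂) ∧
    (∀ C₁ ∈ circuitSet m n, ∀ C₂ ∈ circuitSet m n, C₁ ≠ C₂ →
      ∀ e ∈ C₁ ∩ C₂, ∃ C₃ ∈ circuitSet m n, C₃ ⊆ (C₁ ∪ C₂) \ {e}) := by
  refine ⟨?_, ?_, ?_⟩
  · intro h
    exact Finset.not_nonempty_empty h.1
  · intro C₁ h₁ C₂ h₂ hsub
    by_contra hne
    exact h₂.2.2.2 C₁ (Finset.ssubset_iff_subset_ne.2 ⟨hsub, hne⟩) h₁.1 ⟨h₁.2.1, h₁.2.2.1⟩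
  · intro C₁ h₁ C₂ h₂ hne e he
    have hDne : (C₁ ∆ C₂).Nonempty := by
      rw [Finset.nonempty_iff_ne_empty]
      simpa using hne
    obtain ⟨C₃, hC₃, hsub⟩ := exists_circuit_subset (C₁ ∆ C₂) hDne
      (pairedParallel_symmDiff h₁.2.1 h₂.2.1) (cycleUnion_symmDiff h₁.2.2.1 h₂.2.2.1)
    refine ⟨C₃, hC₃, fun x hx => ?_⟩
    have hxD := hsub hx
    rw [Finset.mem_symmDiff] at hxD
    rw [Finset.mem_inter] at he
    simp only [Finset.mem_sdiff, Finset.mem_union, Finset.mem_singleton]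
    constructor
    · tauto
    · rintro rfl
      tauto
end
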